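/- Every symmetric matrix M over GF(2) with zero diagonal (the adjacency matrix of a graph G on n vertices) can be written as a symmetric difference (entrywise XOR, ignoring the diagonal) of at most rank_{GF(2)}(D ⊕ M) + 1 adjacency matrices of complete graphs on subsets of vertices, for any diagonal matrix D; in particular the minimum number t(G) of clique flips needed to realize G satisfies t(G) ≤ minrank₂(G) + 1, where minrank₂(G) = min over diagonal 0/1 matrices D of rank_{GF(2)}(D ⊕ G). -/

import Mathlib

open Matrix Finset

namespace CliqueFlipAux

variable {n : ℕ}

lemma zmod2_sq (x : ZMod 2) : x * x = x := by revert x; decide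

lemma zmod2_add_self (x : ZMod 2) : x + x = 0 := by revert x; decide

lemma zmod2_cases (c : ZMod 2) : c = 0 ∨ c = 1 := by revert c; decide

lemma zmod2_add_ne_zero {a b : ZMod 2} (h : a ≠ b) : a + b ≠ 0 := by
  revert a b; decide

lemma zmod2_ne_zero {a : ZMod 2} (h : a ≠ 0) : a = 1 := by revert a; decide

lemma quad_eq_diag_dot (A : Matrix (Fin n) (Fin n) (ZMod 2)) (hA : A.IsSymm)
    (x : Fin n → ZMod 2) : x ⬝ᵥ (A *ᵥ x) = (fun i => A i i) ⬝ᵥ x := by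
  have hsym : ∀ i j, A i j = A j i := fun i j => (hA.apply j i)
  have h1 : x ⬝ᵥ (A *ᵥ x) = ∑ p ∈ univ ×ˢ univ, x p.1 * A p.1 p.2 * x p.2 := by
    rw [Finset.sum_product]
    simp [dotProduct, mulVec, dotProduct, Finset.mul_sum, mul_assoc]
  rw [h1, ← Finset.diag_union_offDiag (univ : Finset (Fin n)),
    Finset.sum_union (Finset.disjoint_diag_offDiag _), Finset.sum_diag]
  have h2 : ∑ p ∈ (univ : Finset (Fin n)).offDiag, x p.1 * A p.1 p.2 * x p.2 = 0 := by
    refine Finset.sum_involution (fun p _ => (p.2, p.1)) ?_ ?_ ?_ ?_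
    · intro p _
      have h : x p.2 * A p.2 p.1 * x p.1 = x p.1 * A p.1 p.2 * x p.2 := by
        rw [hsym p.2 p.1]; ring
      rw [h]; exact zmod2_add_self _
    · intro p hp _
      simp only [Finset.mem_offDiag, Finset.mem_univ, true_and] at hp
      simp only [ne_eq, Prod.mk.injEq, not_and]
      intro h; exact hp (Eq.symm (congrArg Prod.fst h))
    · intro p hp
      simp only [Finset.mem_offDiag, Finset.mem_univ, true_and] at hp ⊢
      exact hp.symm
    · intro p _; rfl
  rw [h2, add_zero]
  simp only [dotProduct]
  refine Finset.sum_congr rfl fun i _ => ?_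
  rw [mul_comm (x i) (A i i), mul_assoc, zmod2_sq]

lemma vecMulVec_mulVec' (v w y : Fin n → ZMod 2) :
    (vecMulVec v w) *ᵥ y = (w ⬝ᵥ y) • v := by
  ext i
  simp only [mulVec, vecMulVec_apply, dotProduct, Pi.smul_apply, smul_eq_mul]
  rw [Finset.sum_mul]
  exact Finset.sum_congr rfl fun j _ => by ring

lemma symm_dot_swap (A : Matrix (Fin n) (Fin n) (ZMod 2)) (hA : A.IsSymm)
    (u y : Fin n → ZMod 2) : (A *ᵥ u) ⬝ᵥ y = u ⬝ᵥ (A *ᵥ y) := by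
  rw [Matrix.dotProduct_mulVec, ← Matrix.mulVec_transpose, hA.eq]

lemma range_add_vecMulVec_le (A : Matrix (Fin n) (Fin n) (ZMod 2)) (x : Fin n → ZMod 2) :
    LinearMap.range (A + vecMulVec (A *ᵥ x) (A *ᵥ x)).mulVecLin ≤
      LinearMap.range A.mulVecLin := by
  rintro z ⟨y, rfl⟩
  rw [mulVecLin_apply, add_mulVec, vecMulVec_mulVec']
  exact Submodule.add_mem _ ⟨y, by rw [mulVecLin_apply]⟩
    (Submodule.smul_mem _ _ ⟨x, by rw [mulVecLin_apply]⟩)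

lemma rank_add_vecMulVec_le (A : Matrix (Fin n) (Fin n) (ZMod 2)) (x : Fin n → ZMod 2) :
    (A + vecMulVec (A *ᵥ x) (A *ᵥ x)).rank ≤ A.rank :=
  Submodule.finrank_mono (range_add_vecMulVec_le A x)

lemma rank_pivot_lt (A : Matrix (Fin n) (Fin n) (ZMod 2)) (hA : A.IsSymm)
    (x : Fin n → ZMod 2) (hx : x ⬝ᵥ (A *ᵥ x) = 1) :
    (A + vecMulVec (A *ᵥ x) (A *ᵥ x)).rank < A.rank := by
  set v := A *ᵥ x with hv
  set A' := A + vecMulVec v v with hA'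
  have hnotmem : v ∉ LinearMap.range A'.mulVecLin := by
    rintro ⟨y, hy⟩
    rw [mulVecLin_apply, hA', add_mulVec, vecMulVec_mulVec'] at hy
    have hc : v ⬝ᵥ y = x ⬝ᵥ (A *ᵥ y) := symm_dot_swap A hA x y
    rcases zmod2_cases (v ⬝ᵥ y) with h0 | h1
    · rw [h0, zero_smul, add_zero] at hy
      rw [hc, hy, hx] at h0
      exact one_ne_zero h0
    · rw [h1, one_smul] at hy
      have hz : A *ᵥ y = 0 := add_eq_right.mp hy
      rw [hc, hz, dotProduct_zero] at h1
      exact zero_ne_one h1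
  have hmem : v ∈ LinearMap.range A.mulVecLin := ⟨x, by rw [mulVecLin_apply]⟩
  have hlt : LinearMap.range A'.mulVecLin < LinearMap.range A.mulVecLin :=
    lt_of_le_of_ne (range_add_vecMulVec_le A x) (fun h => hnotmem (h ▸ hmem))
  exact Submodule.finrank_lt_finrank_of_lt hlt

lemma isSymm_add_vecMulVec (A : Matrix (Fin n) (Fin n) (ZMod 2)) (hA : A.IsSymm)
    (v : Fin n → ZMod 2) : (A + vecMulVec v v).IsSymm := by
  unfold Matrix.IsSymm
  rw [transpose_add, hA.eq]
  congr 1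
  ext i j
  simp [vecMulVec_apply, mul_comm]

lemma rank_pos_of_diag_ne (A : Matrix (Fin n) (Fin n) (ZMod 2)) {i : Fin n}
    (h : A i i ≠ 0) : 0 < A.rank := by
  rw [Matrix.rank]
  rw [Module.finrank_pos_iff_exists_ne_zero]
  refine ⟨⟨A *ᵥ Pi.single i 1, ⟨Pi.single i 1, by rw [mulVecLin_apply]⟩⟩, ?_⟩
  intro hz
  apply h
  have hz' : A *ᵥ Pi.single i 1 = 0 := congrArg Subtype.val hz
  have := congrArg (fun w => w i) hz'
  simpa [Matrix.mulVec_single] using this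

/-- Main induction: a symmetric GF(2) matrix with a nonzero diagonal entry and rank ≤ r
agrees off the diagonal with a sum of at most r rank-one squares. -/
lemma claim1 : ∀ (r : ℕ) (A : Matrix (Fin n) (Fin n) (ZMod 2)), A.IsSymm → A.rank ≤ r →
    (∃ i, A i i ≠ 0) →
    ∃ (m : ℕ) (v : Fin m → Fin n → ZMod 2), m ≤ r ∧
      ∀ i j, i ≠ j → A i j = ∑ t, v t i * v t j := by
  intro r
  induction r with
  | zero =>
    intro A hA hr hd
    obtain ⟨i, hi⟩ := hd
    have := rank_pos_of_diag_ne A hi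
    omega
  | succ r ih =>
    intro A hA hr hd
    set d : Fin n → ZMod 2 := fun i => A i i with hd_def
    by_cases hx : ∃ x, d ⬝ᵥ x = 1 ∧ A *ᵥ x ≠ d
    · obtain ⟨x, hx1, hx2⟩ := hx
      have hq : x ⬝ᵥ (A *ᵥ x) = 1 := by rw [quad_eq_diag_dot A hA x]; exact hx1
      set v := A *ᵥ x with hv
      set A' := A + vecMulVec v v with hA'
      have hsymm' : A'.IsSymm := isSymm_add_vecMulVec A hA v
      have hrank' : A'.rank ≤ r :=
        Nat.lt_succ_iff.mp (lt_of_lt_of_le (rank_pivot_lt A hA x hq) hr)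
      have hd' : ∃ i, A' i i ≠ 0 := by
        have : ∃ i, v i ≠ d i := by
          by_contra hcon
          push_neg at hcon
          exact hx2 (funext hcon)
        obtain ⟨i, hi⟩ := this
        refine ⟨i, ?_⟩
        have heq : A' i i = d i + v i := by
          rw [hA']
          simp only [Matrix.add_apply, vecMulVec_apply, zmod2_sq]
          rfl
        rw [heq]
        exact zmod2_add_ne_zero hi.symm
      obtain ⟨m, w, hm, hw⟩ := ih A' hsymm' hrank' hd'
      refine ⟨m + 1, Fin.cons v w, Nat.succ_le_succ hm, ?_⟩
      intro i j hij
      rw [Fin.sum_univ_succ]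
      simp only [Fin.cons_zero, Fin.cons_succ]
      have h1 : A' i j = A i j + v i * v j := by
        rw [hA']; simp [Matrix.add_apply, vecMulVec_apply]
      have h2 := hw i j hij
      rw [h1] at h2
      rw [← h2, add_comm (v i * v j) (A i j + v i * v j), add_assoc, zmod2_add_self,
        add_zero]
    · push_neg at hx
      obtain ⟨i0, hi0⟩ := hd
      have hdi0 : d i0 = 1 := zmod2_ne_zero hi0
      have hx0 : d ⬝ᵥ Pi.single i0 1 = 1 := by
        simp [dotProduct, Pi.single_apply, hdi0]
      have hcol : ∀ y, A *ᵥ y = (d ⬝ᵥ y) • d := by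
        intro y
        rcases zmod2_cases (d ⬝ᵥ y) with h0 | h1
        · have h1' : d ⬝ᵥ (y + Pi.single i0 1) = 1 := by
            rw [dotProduct_add, h0, zero_add, hx0]
          have e1 := hx (y + Pi.single i0 1) h1'
          have e2 := hx (Pi.single i0 1) hx0
          rw [mulVec_add, e2] at e1
          have : A *ᵥ y = 0 := by
            have := congrArg (fun w => w + d) e1
            simpa [add_assoc, zmod2_add_self] using this.symm
          rw [this, h0, zero_smul]
        · rw [h1, one_smul]; exact hx y h1
      have hAeq : ∀ i j, A i j = d i * d j := by
        intro i j
        have := congrArg (fun w => w i) (hcol (Pi.single j 1))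
        simp only [Matrix.mulVec_single, mul_one, Pi.smul_apply, smul_eq_mul,
          MulOpposite.op_one, one_smul, Matrix.col_apply] at this
        rw [this]
        have : d ⬝ᵥ Pi.single j 1 = d j := by
          simp [dotProduct, Pi.single_apply]
        rw [this, mul_comm]
      exact ⟨1, fun _ => d, Nat.one_le_iff_ne_zero.mpr (Nat.succ_ne_zero r), fun i j _ => by
        simp [hAeq i j]⟩

/-- Any symmetric GF(2) matrix agrees off the diagonal with a sum of at most rank+1
rank-one squares. -/
lemma main_aux (A : Matrix (Fin n) (Fin n) (ZMod 2)) (hA : A.IsSymm) :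
    ∃ (m : ℕ) (v : Fin m → Fin n → ZMod 2), m ≤ A.rank + 1 ∧
      ∀ i j, i ≠ j → A i j = ∑ t, v t i * v t j := by
  by_cases hd : ∃ i, A i i ≠ 0
  · obtain ⟨m, v, hm, hv⟩ := claim1 A.rank A hA le_rfl hd
    exact ⟨m, v, hm.trans (Nat.le_succ _), hv⟩
  · push_neg at hd
    by_cases hoff : ∀ i j, i ≠ j → A i j = 0
    · exact ⟨0, Fin.elim0, Nat.zero_le _, fun i j hij => by simp [hoff i j hij]⟩
    · push_neg at hoff
      obtain ⟨i, j, hij, hAij⟩ := hoff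
      set x : Fin n → ZMod 2 := Pi.single i 1 + Pi.single j 1 with hxdef
      set v := A *ᵥ x with hv
      have hvi : v i = A i j := by
        rw [hv, hxdef, mulVec_add]
        simp [Matrix.mulVec_single, hd i]
      set A' := A + vecMulVec v v with hA'
      have hsymm' : A'.IsSymm := isSymm_add_vecMulVec A hA v
      have hrank' : A'.rank ≤ A.rank := rank_add_vecMulVec_le A x
      have hd' : ∃ k, A' k k ≠ 0 := by
        refine ⟨i, ?_⟩
        have : A' i i = A i i + v i := by
          rw [hA']
          simp only [Matrix.add_apply, vecMulVec_apply, zmod2_sq]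
        rw [this, hd i, zero_add, hvi]
        exact hAij
      obtain ⟨m, w, hm, hw⟩ := claim1 A.rank A' hsymm' hrank' hd'
      refine ⟨m + 1, Fin.cons v w, Nat.succ_le_succ hm, ?_⟩
      intro a b hab
      rw [Fin.sum_univ_succ]
      simp only [Fin.cons_zero, Fin.cons_succ]
      have h1 : A' a b = A a b + v a * v b := by
        rw [hA']; simp [Matrix.add_apply, vecMulVec_apply]
      have h2 := hw a b hab
      rw [h1] at h2
      rw [← h2, add_comm (v a * v b) (A a b + v a * v b), add_assoc, zmod2_add_self,
        add_zero]

end CliqueFlipAux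

/-- Every symmetric zero-diagonal matrix `M` over GF(2) (adjacency matrix of a
graph) can be written, off the diagonal, as the entrywise XOR of at most
`rank (D + M) + 1` adjacency matrices of complete graphs on vertex subsets, for any
diagonal 0/1 matrix `D`.  In particular `t(G) ≤ minrank₂(G) + 1`. -/
theorem clique_flip_upper_bound (n : ℕ) (M D : Matrix (Fin n) (Fin n) (ZMod 2))
    (hsymm : M.IsSymm) (hdiag : ∀ i, M i i = 0) (hD : D.IsDiag) :
    ∃ (m : ℕ) (S : Fin m → Finset (Fin n)),
      m ≤ (D + M).rank + 1 ∧
      ∀ i j : Fin n, i ≠ j →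
        M i j = ∑ t : Fin m, (if i ∈ S t ∧ j ∈ S t then (1 : ZMod 2) else 0) := by
  have hAsymm : (D + M).IsSymm := hD.isSymm.add hsymm
  obtain ⟨m, v, hm, hv⟩ := CliqueFlipAux.main_aux (D + M) hAsymm
  refine ⟨m, fun t => Finset.univ.filter (fun i => v t i = 1), hm, ?_⟩
  intro i j hij
  have hDij : D i j = 0 := hD hij
  have hMA : M i j = (D + M) i j := by simp [Matrix.add_apply, hDij]
  rw [hMA, hv i j hij]
  refine Finset.sum_congr rfl fun t _ => ?_
  simp only [Finset.mem_filter, Finset.mem_univ, true_and]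
  rcases CliqueFlipAux.zmod2_cases (v t i) with h | h <;>
    rcases CliqueFlipAux.zmod2_cases (v t j) with g | g <;>
      simp [h, g]
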